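/- Let A ⊂ ℤ with |A| = d, let Ω = ⋃_{a∈A}[a, a+1], and let Γ = {γ_0, γ_1, …, γ_{d−1}} ⊂ [0,1) be distinct reals such that Λ = Γ + ℤ is a spectrum for Ω. Then for every nonzero integer n ∈ A − A, one has ∑_{j=0}^{d−1} e^{2πiγ_j n} = 0; that is, (A − A) \ {0} is contained in the integer zero set of δ̂_Γ. -/

import Mathlib

open MeasureTheory Complex

/-- `Λ` is a spectrum for `Ω`: the normalized exponentials
`|Ω|^{-1/2} e^{2πiλx}·1_Ω`, `λ ∈ Λ`, form a Hilbert (orthonormal) basis of `L²(Ω)`. -/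
def IsSpectrum (Ω : Set ℝ) (Λ : Set ℝ) : Prop :=
  ∃ b : HilbertBasis Λ ℂ (Lp ℂ 2 (volume.restrict Ω)),
    ∀ lam : Λ,
      (b lam : ℝ → ℂ) =ᵐ[volume.restrict Ω]
        fun x => ((Real.sqrt (volume Ω).toReal : ℂ))⁻¹ *
          Complex.exp (2 * Real.pi * Complex.I * (lam : ℝ) * x)

noncomputable def unitFT (lam : ℝ) : ℂ :=
  ∫ t in (0:ℝ)..1, Complex.exp (2 * Real.pi * Complex.I * lam * t)

lemma unitFT_shift (lam c : ℝ) :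
    ∫ x in c..(c+1), Complex.exp (2 * Real.pi * Complex.I * lam * x)
      = Complex.exp (2 * Real.pi * Complex.I * lam * c) * unitFT lam := by
  have h := intervalIntegral.integral_comp_add_left (a := (0:ℝ)) (b := 1)
    (fun x => Complex.exp (2 * Real.pi * Complex.I * lam * x)) c
  rw [add_zero] at h
  rw [← h, unitFT, ← intervalIntegral.integral_const_mul]
  refine intervalIntegral.integral_congr fun x _ => ?_
  rw [← Complex.exp_add]
  congr 1
  push_cast
  ring

lemma unitFT_parseval (g : ℝ) : ∑' m : ℤ, ‖unitFT (g + m)‖ ^ 2 = 1 := by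
  haveI : Fact (0 < (1:ℝ)) := ⟨one_pos⟩
  set F : ℝ → ℂ := fun x => Complex.exp (2 * Real.pi * Complex.I * g * x) with hF
  have hFnorm : ∀ x : ℝ, ‖F x‖ = 1 := by
    intro x
    simp [hF, Complex.norm_exp]
  set f : AddCircle (1:ℝ) → ℂ := AddCircle.liftIoc 1 0 F with hf
  have hfnorm : ∀ t, ‖f t‖ = 1 := fun t => hFnorm _
  have hmeas : Measurable f := by
    have : f = (F ∘ (Subtype.val)) ∘ (AddCircle.measurableEquivIoc 1 0) := rfl
    rw [this]
    exact ((Complex.continuous_exp.comp (by continuity)).measurable.comp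
      measurable_subtype_coe).comp (AddCircle.measurableEquivIoc 1 0).measurable
  have hmem : MemLp f 2 AddCircle.haarAddCircle :=
    MemLp.of_bound hmeas.aestronglyMeasurable 1 (Filter.Eventually.of_forall fun t => (hfnorm t).le)
  set fL := hmem.toLp f with hfL
  have hcoeff : ∀ i : ℤ, fourierCoeff (fL : AddCircle (1:ℝ) → ℂ) i = unitFT (g - i) := by
    intro i
    have h1 : fourierCoeff (⇑fL) i = fourierCoeff f i := by
      unfold fourierCoeff
      refine integral_congr_ae ?_
      filter_upwards [hmem.coeFn_toLp] with t ht
      rw [ht]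
    rw [h1, hf, fourierCoeff_liftIoc_eq, fourierCoeffOn_eq_integral]
    rw [show ((1:ℝ)/(0+1-0) : ℝ) = 1 by norm_num, one_smul, unitFT,
      show (0:ℝ)+1 = 1 by norm_num]
    refine intervalIntegral.integral_congr fun x _ => ?_
    rw [fourier_coe_apply, hF, smul_eq_mul, ← Complex.exp_add]
    congr 1
    push_cast
    ring
  have hpars := tsum_sq_fourierCoeff fL
  have hrhs : ∫ t : AddCircle (1:ℝ), ‖fL t‖ ^ 2 ∂AddCircle.haarAddCircle = 1 := by
    have : ∫ t : AddCircle (1:ℝ), ‖fL t‖ ^ 2 ∂AddCircle.haarAddCircle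
        = ∫ _t : AddCircle (1:ℝ), (1:ℝ) ∂AddCircle.haarAddCircle := by
      refine integral_congr_ae ?_
      filter_upwards [hmem.coeFn_toLp] with t ht
      rw [ht, hfnorm t, one_pow]
    rw [this]
    simp
  rw [hrhs] at hpars
  simp_rw [hcoeff] at hpars
  rw [← hpars]
  have := (Equiv.neg ℤ).tsum_eq (fun i : ℤ => ‖unitFT (g - i)‖ ^ 2)
  rw [← this]
  refine tsum_congr fun m => ?_
  have hm : g + (m:ℝ) = g - (((Equiv.neg ℤ) m : ℤ):ℝ) := by
    simp
  rw [hm]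

theorem stmt14 (d : ℕ) (A : Finset ℤ) (hcard : A.card = d)
    (γ : Fin d → ℝ) (hinj : Function.Injective γ)
    (hrange : ∀ j, γ j ∈ Set.Ico (0 : ℝ) 1)
    (hspec : IsSpectrum (⋃ a ∈ A, Set.Icc (a : ℝ) (a + 1))
      {x : ℝ | ∃ j : Fin d, ∃ n : ℤ, x = γ j + n}) :
    ∀ n : ℤ, n ≠ 0 → (∃ a ∈ A, ∃ b ∈ A, n = a - b) →
      ∑ j : Fin d, Complex.exp (2 * Real.pi * Complex.I * γ j * n) = 0 := by
  rintro n hn ⟨a, ha, b, hb, hab⟩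
  set Ω : Set ℝ := ⋃ a ∈ A, Set.Icc (a:ℝ) (a+1) with hΩdef
  obtain ⟨bas, hbas⟩ := hspec
  have hsub : ∀ c : ℤ, c ∈ A → Set.Icc (c:ℝ) (c+1) ⊆ Ω := by
    intro c hc x hx
    exact Set.mem_biUnion hc hx
  have hIccvol : ∀ c : ℤ, volume (Set.Icc (c:ℝ) (c+1)) = 1 := by
    intro c
    rw [Real.volume_Icc]
    simp
  have hfin : volume Ω ≠ ⊤ := by
    refine ne_top_of_le_ne_top ?_ (measure_biUnion_finset_le A _)
    rw [Finset.sum_congr rfl fun c _ => hIccvol c, Finset.sum_const]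
    simp
  have hpos : 0 < volume Ω := by
    refine lt_of_lt_of_le ?_ (measure_mono (hsub a ha))
    rw [hIccvol a]
    norm_num
  have htr : 0 < (volume Ω).toReal := ENNReal.toReal_pos hpos.ne' hfin
  set KC : ℂ := ((Real.sqrt (volume Ω).toReal : ℂ))⁻¹ with hKC
  have hKCconj : (starRingEnd ℂ) KC = KC := by
    rw [hKC, map_inv₀, Complex.conj_ofReal]
  have hKCne : KC ≠ 0 := by
    rw [hKC]
    refine inv_ne_zero ?_
    simp only [ne_eq, Complex.ofReal_eq_zero]
    exact (Real.sqrt_pos.mpr htr).ne'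
  have hμfin : ∀ c : ℤ, (volume.restrict Ω) (Set.Icc (c:ℝ) (c+1)) ≠ ⊤ := by
    intro c
    refine ne_top_of_le_ne_top ?_ (Measure.restrict_apply_le _ _)
    rw [hIccvol c]
    exact ENNReal.one_ne_top
  have hres : ∀ c : ℤ, c ∈ A → (volume.restrict Ω).restrict (Set.Icc (c:ℝ) (c+1))
      = volume.restrict (Set.Icc (c:ℝ) (c+1)) := by
    intro c hc
    rw [Measure.restrict_restrict measurableSet_Icc,
      Set.inter_eq_self_of_subset_left (hsub c hc)]
  -- the indicator functions
  set fa : Lp ℂ 2 (volume.restrict Ω) :=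
    indicatorConstLp 2 measurableSet_Icc (hμfin a) (1:ℂ) with hfa
  set fb : Lp ℂ 2 (volume.restrict Ω) :=
    indicatorConstLp 2 measurableSet_Icc (hμfin b) (1:ℂ) with hfb
  -- inner products with basis vectors
  have hinner : ∀ (c : ℤ) (hc : c ∈ A) (lam : {x : ℝ | ∃ j : Fin d, ∃ n : ℤ, x = γ j + n}),
      (inner ℂ (indicatorConstLp 2 measurableSet_Icc (hμfin c) (1:ℂ)) (bas lam) : ℂ)
        = KC * (Complex.exp (2*Real.pi*Complex.I*(lam:ℝ)*(c:ℝ)) * unitFT (lam:ℝ)) := by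
    intro c hc lam
    rw [L2.inner_indicatorConstLp_one]
    have h1 : ∫ x in Set.Icc (c:ℝ) (c+1), (bas lam) x ∂(volume.restrict Ω)
        = ∫ x in Set.Icc (c:ℝ) (c+1),
            KC * Complex.exp (2*Real.pi*Complex.I*(lam:ℝ)*x) ∂(volume.restrict Ω) :=
      integral_congr_ae (ae_restrict_of_ae (hbas lam))
    rw [h1]
    show ∫ x, KC * Complex.exp (2*Real.pi*Complex.I*(lam:ℝ)*x)
        ∂((volume.restrict Ω).restrict (Set.Icc (c:ℝ) (c+1))) = _
    rw [hres c hc, integral_const_mul]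
    have h2 : ∫ x in Set.Icc (c:ℝ) (c+1), Complex.exp (2*Real.pi*Complex.I*(lam:ℝ)*x)
        = ∫ x in (c:ℝ)..((c:ℝ)+1), Complex.exp (2*Real.pi*Complex.I*(lam:ℝ)*x) := by
      rw [MeasureTheory.integral_Icc_eq_integral_Ioc,
        intervalIntegral.integral_of_le (by linarith : (c:ℝ) ≤ (c:ℝ)+1)]
    rw [h2, unitFT_shift]
  -- inner product of the two indicators is zero
  have hnull : volume (Set.Icc (a:ℝ) (a+1) ∩ Set.Icc (b:ℝ) (b+1)) = 0 := by
    have hne : a ≠ b := fun h => hn (by omega)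
    rw [Set.Icc_inter_Icc, Real.volume_Icc]
    refine ENNReal.ofReal_eq_zero.mpr ?_
    rcases lt_or_gt_of_ne hne with h | h
    · have : (a:ℝ) + 1 ≤ (b:ℝ) := by exact_mod_cast (by omega : a + 1 ≤ b)
      rw [min_def, max_def]
      split_ifs <;> linarith
    · have : (b:ℝ) + 1 ≤ (a:ℝ) := by exact_mod_cast (by omega : b + 1 ≤ a)
      rw [min_def, max_def]
      split_ifs <;> linarith
  have hinner0 : (inner ℂ fa fb : ℂ) = 0 := by
    rw [hfa, L2.inner_indicatorConstLp_one]
    have hz : ⇑fb =ᵐ[(volume.restrict Ω).restrict (Set.Icc (a:ℝ) (a+1))]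
        (fun _ => (0:ℂ)) := by
      rw [hres a ha]
      have h1 : ⇑fb =ᵐ[volume.restrict (Set.Icc (a:ℝ) (a+1))]
          (Set.Icc (b:ℝ) (b+1)).indicator (fun _ => (1:ℂ)) := by
        rw [← hres a ha]
        exact ae_restrict_of_ae indicatorConstLp_coeFn
      refine h1.trans ?_
      have h3 : (volume.restrict (Set.Icc (a:ℝ) (a+1))) (Set.Icc (b:ℝ) (b+1)) = 0 := by
        rw [Measure.restrict_apply' measurableSet_Icc, Set.inter_comm]
        exact hnull
      rw [Filter.eventuallyEq_iff_exists_mem]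
      refine ⟨{x | x ∉ Set.Icc (b:ℝ) (b+1)}, ?_, ?_⟩
      · rw [mem_ae_iff]
        refine measure_mono_null ?_ h3
        intro x hx
        simpa using hx
      · intro x hx
        exact Set.indicator_of_notMem hx _
    calc ∫ x in Set.Icc (a:ℝ) (a+1), fb x ∂(volume.restrict Ω)
        = ∫ _x in Set.Icc (a:ℝ) (a+1), (0:ℂ) ∂(volume.restrict Ω) := integral_congr_ae hz
      _ = 0 := by simp
  -- bijection between Fin d × ℤ and the spectrum index set
  have hbij : Function.Bijective (fun p : Fin d × ℤ =>
      (⟨γ p.1 + p.2, ⟨p.1, p.2, rfl⟩⟩ : {x : ℝ | ∃ j : Fin d, ∃ n : ℤ, x = γ j + n})) := by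
    constructor
    · rintro ⟨j, m⟩ ⟨k, l⟩ h
      have h' : γ j + (m:ℝ) = γ k + (l:ℝ) := congrArg Subtype.val h
      have h2 := hrange j
      have h3 := hrange k
      simp only [Set.mem_Ico] at h2 h3
      have hml : m = l := by
        by_contra hne
        have h1 : (1:ℝ) ≤ |((m - l : ℤ):ℝ)| := by
          rw [← Int.cast_abs]
          exact_mod_cast Int.one_le_abs (sub_ne_zero.mpr hne)
        have h4 : ((m - l : ℤ):ℝ) = γ k - γ j := by push_cast; linarith
        have h5 : |((m - l : ℤ):ℝ)| < 1 := by
          rw [h4, abs_lt]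
          constructor <;> linarith
        linarith
      subst hml
      have hjk : j = k := hinj (by linarith)
      subst hjk
      rfl
    · rintro ⟨x, hx⟩
      obtain ⟨j, m, rfl⟩ := hx
      exact ⟨(j, m), rfl⟩
  set e : Fin d × ℤ ≃ {x : ℝ | ∃ j : Fin d, ∃ n : ℤ, x = γ j + n} :=
    Equiv.ofBijective _ hbij with he
  -- Parseval for the pair (fa, fb)
  have hsum := bas.tsum_inner_mul_inner fa fb
  rw [hinner0] at hsum
  have hsummable := bas.summable_inner_mul_inner fa fb
  -- rewrite each term
  have hterm : ∀ lam : {x : ℝ | ∃ j : Fin d, ∃ n : ℤ, x = γ j + n},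
      (inner ℂ fa (bas lam) : ℂ) * inner ℂ (bas lam) fb
        = KC^2 * Complex.exp (2*Real.pi*Complex.I*(lam:ℝ)*(n:ℂ))
            * ((‖unitFT (lam:ℝ)‖^2 : ℝ) : ℂ) := by
    intro lam
    have hb2 : (inner ℂ (bas lam) fb : ℂ)
        = (starRingEnd ℂ) (KC * (Complex.exp (2*Real.pi*Complex.I*(lam:ℝ)*(b:ℝ)) * unitFT (lam:ℝ))) := by
      rw [← inner_conj_symm, hfb, hinner b hb lam]
    rw [hfa, hinner a ha lam, hb2]
    rw [map_mul, map_mul, hKCconj]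
    have hzb : (starRingEnd ℂ) (Complex.exp (2*Real.pi*Complex.I*(lam:ℝ)*(b:ℝ)))
        = Complex.exp (-(2*Real.pi*Complex.I*(lam:ℝ)*(b:ℝ))) := by
      rw [← Complex.exp_conj]
      congr 1
      simp only [map_mul, map_ofNat, Complex.conj_ofReal, Complex.conj_I]
      ring
    rw [hzb]
    have hexpc : Complex.exp (2*Real.pi*Complex.I*(lam:ℝ)*(a:ℝ))
        * Complex.exp (-(2*Real.pi*Complex.I*(lam:ℝ)*(b:ℝ)))
        = Complex.exp (2*Real.pi*Complex.I*(lam:ℝ)*(n:ℂ)) := by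
      rw [← Complex.exp_add]
      congr 1
      have : ((n:ℤ):ℂ) = ((a:ℤ):ℂ) - ((b:ℤ):ℂ) := by exact_mod_cast congrArg (Int.cast : ℤ → ℂ) hab
      rw [this]
      push_cast
      ring
    have hcc : unitFT (lam:ℝ) * (starRingEnd ℂ) (unitFT (lam:ℝ))
        = ((‖unitFT (lam:ℝ)‖^2 : ℝ) : ℂ) := by
      rw [Complex.mul_conj, Complex.normSq_eq_norm_sq]
    calc KC * (Complex.exp (2*Real.pi*Complex.I*(lam:ℝ)*(a:ℝ)) * unitFT (lam:ℝ))
          * (KC * ((Complex.exp (-(2*Real.pi*Complex.I*(lam:ℝ)*(b:ℝ)))) * (starRingEnd ℂ) (unitFT (lam:ℝ))))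
        = KC^2 * (Complex.exp (2*Real.pi*Complex.I*(lam:ℝ)*(a:ℝ))
            * Complex.exp (-(2*Real.pi*Complex.I*(lam:ℝ)*(b:ℝ))))
            * (unitFT (lam:ℝ) * (starRingEnd ℂ) (unitFT (lam:ℝ))) := by ring
      _ = KC^2 * Complex.exp (2*Real.pi*Complex.I*(lam:ℝ)*(n:ℂ))
            * ((‖unitFT (lam:ℝ)‖^2 : ℝ) : ℂ) := by rw [hexpc, hcc]
  -- transfer the sum
  have hsum2 : ∑' lam : {x : ℝ | ∃ j : Fin d, ∃ n : ℤ, x = γ j + n},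
      KC^2 * Complex.exp (2*Real.pi*Complex.I*(lam:ℝ)*(n:ℂ)) * ((‖unitFT (lam:ℝ)‖^2 : ℝ) : ℂ) = 0 :=
    (tsum_congr hterm).symm.trans hsum
  have hS2 : Summable (fun lam : {x : ℝ | ∃ j : Fin d, ∃ n : ℤ, x = γ j + n} =>
      KC^2 * Complex.exp (2*Real.pi*Complex.I*(lam:ℝ)*(n:ℂ)) * ((‖unitFT (lam:ℝ)‖^2 : ℝ) : ℂ)) :=
    hsummable.congr hterm
  have hS3 : Summable (fun p : Fin d × ℤ =>
      KC^2 * Complex.exp (2*Real.pi*Complex.I*((e p : ℝ))*(n:ℂ))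
        * ((‖unitFT (e p : ℝ)‖^2 : ℝ) : ℂ)) :=
    hS2.comp_injective e.injective
  have hval : ∀ p : Fin d × ℤ, (e p : ℝ) = γ p.1 + p.2 := fun p => rfl
  have htot : ∑' p : Fin d × ℤ, (KC^2 * Complex.exp (2*Real.pi*Complex.I*((e p : ℝ))*(n:ℂ))
      * ((‖unitFT (e p : ℝ)‖^2 : ℝ) : ℂ)) = 0 :=
    (e.tsum_eq (fun lam => KC^2 * Complex.exp (2*Real.pi*Complex.I*((lam : ℝ))*(n:ℂ))
      * ((‖unitFT (lam : ℝ)‖^2 : ℝ) : ℂ))).trans hsum2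
  have hsplit : ∑' (j : Fin d), ∑' (m : ℤ),
      (KC^2 * Complex.exp (2*Real.pi*Complex.I*((e (j, m) : ℝ))*(n:ℂ))
        * ((‖unitFT (e (j, m) : ℝ)‖^2 : ℝ) : ℂ)) = 0 := by
    rw [← Summable.tsum_prod' hS3 (fun j => hS3.prod_factor j)]
    exact htot
  have hj : ∀ j : Fin d, ∑' (m : ℤ),
      (KC^2 * Complex.exp (2*Real.pi*Complex.I*((e (j, m) : ℝ))*(n:ℂ))
        * ((‖unitFT (e (j, m) : ℝ)‖^2 : ℝ) : ℂ))
      = KC^2 * Complex.exp (2*Real.pi*Complex.I*(γ j)*(n:ℂ)) := by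
    intro j
    have h1 : ∀ m : ℤ, KC^2 * Complex.exp (2*Real.pi*Complex.I*((e (j, m) : ℝ))*(n:ℂ))
        * ((‖unitFT (e (j, m) : ℝ)‖^2 : ℝ) : ℂ)
        = (KC^2 * Complex.exp (2*Real.pi*Complex.I*(γ j)*(n:ℂ)))
            * ((‖unitFT (γ j + (m:ℝ))‖^2 : ℝ) : ℂ) := by
      intro m
      have hE : Complex.exp (2*Real.pi*Complex.I*((γ j + (m:ℝ) : ℝ))*(n:ℂ))
          = Complex.exp (2*Real.pi*Complex.I*(γ j)*(n:ℂ)) := by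
        have harg : (2*(Real.pi:ℂ)*Complex.I*((γ j + (m:ℝ) : ℝ):ℂ)*(n:ℂ))
            = 2*(Real.pi:ℂ)*Complex.I*((γ j : ℝ):ℂ)*(n:ℂ) + ((m*n : ℤ):ℂ) * (2*(Real.pi:ℂ)*Complex.I) := by
          push_cast
          ring
        rw [harg, Complex.exp_add, Complex.exp_int_mul_two_pi_mul_I, mul_one]
      rw [hval (j, m), hE]
    rw [tsum_congr h1, tsum_mul_left, ← Complex.ofReal_tsum, unitFT_parseval,
      Complex.ofReal_one, mul_one]
  have hfinal : ∑ j : Fin d, KC^2 * Complex.exp (2*Real.pi*Complex.I*(γ j)*(n:ℂ)) = 0 := by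
    rw [← tsum_fintype (L := SummationFilter.unconditional _)]
    exact (tsum_congr hj).symm.trans hsplit
  rw [← Finset.mul_sum] at hfinal
  rcases mul_eq_zero.mp hfinal with h | h
  · exact absurd h (pow_ne_zero 2 hKCne)
  · exact h
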